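/- arXiv:1708.01517 — 2 statements merged into one kernel-verified Lean document; each statement's English description precedes it below -/
import Mathlib

section
/- The function g₁ : ℝ → ℝ defined by g₁(h) := (tanh(h⁴))^{1/2} is real-analytic on the whole real line (it is the composition of analytic functions away from 0, and it admits a convergent power series expansion g₁(h) = h²·(1 + Σ_{n≥1} T_n h^{8n})^{1/2} in a neighborhood of h = 0, where Σ T_n z^{2n+1} is the Taylor series of tanh). Moreover g₁ is not a polynomial function. -/
open Filter Topology

private lemma analyticAt_rlog {x : ℝ} (hx : 0 < x) : AnalyticAt ℝ Real.log x := by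
  have h1 : AnalyticAt ℝ (fun y : ℝ => (Complex.log (y : ℂ)).re) x := by
    have hofReal : AnalyticAt ℝ (fun y : ℝ => (y : ℂ)) x :=
      Complex.ofRealCLM.analyticAt x
    have hclog : AnalyticAt ℝ Complex.log ((x : ℝ) : ℂ) :=
      (analyticAt_clog (Complex.ofReal_mem_slitPlane.mpr hx)).restrictScalars
    have hre : AnalyticAt ℝ Complex.re (Complex.log ((x : ℝ) : ℂ)) :=
      Complex.reCLM.analyticAt _
    exact (hre.comp hclog).comp hofReal
  have h2 : (fun y : ℝ => (Complex.log (y : ℂ)).re) = Real.log :=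
    funext Complex.log_ofReal_re
  rwa [h2] at h1

private lemma analyticAt_rsqrt {x : ℝ} (hx : 0 < x) : AnalyticAt ℝ Real.sqrt x := by
  have h1 : AnalyticAt ℝ (fun y : ℝ => Real.exp (Real.log y * (1 / 2))) x :=
    ((analyticAt_rlog hx).mul analyticAt_const).rexp
  apply h1.congr
  filter_upwards [eventually_gt_nhds hx] with y hy
  rw [Real.sqrt_eq_rpow, Real.rpow_def_of_pos hy]

private lemma analyticAt_rtanh (x : ℝ) : AnalyticAt ℝ Real.tanh x := by
  have h1 : AnalyticAt ℝ (fun y : ℝ => Real.exp y) x := analyticAt_rexp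
  have h2 : AnalyticAt ℝ (fun y : ℝ => Real.exp (-y)) x := (analyticAt_id.neg).rexp
  have hs : AnalyticAt ℝ Real.sinh x := by
    have h3 : AnalyticAt ℝ (fun y : ℝ => (Real.exp y - Real.exp (-y)) / 2) x :=
      by exact (h1.sub h2).div analyticAt_const two_ne_zero
    exact h3.congr (Filter.Eventually.of_forall fun y => (Real.sinh_eq y).symm)
  have hc : AnalyticAt ℝ Real.cosh x := by
    have h3 : AnalyticAt ℝ (fun y : ℝ => (Real.exp y + Real.exp (-y)) / 2) x :=
      by exact (h1.add h2).div analyticAt_const two_ne_zero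
    exact h3.congr (Filter.Eventually.of_forall fun y => (Real.cosh_eq y).symm)
  have ht : AnalyticAt ℝ (fun y : ℝ => Real.sinh y / Real.cosh y) x :=
    hs.div hc (Real.cosh_pos x).ne'
  exact ht.congr (Filter.Eventually.of_forall fun y => (Real.tanh_eq_sinh_div_cosh y).symm)

private lemma rtanh_pos {x : ℝ} (hx : 0 < x) : 0 < Real.tanh x := by
  rw [Real.tanh_eq_sinh_div_cosh]
  exact div_pos (Real.sinh_pos_iff.mpr hx) (Real.cosh_pos x)

private lemma rtanh_lt_one (x : ℝ) : Real.tanh x < 1 := by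
  rw [Real.tanh_eq_sinh_div_cosh, div_lt_one (Real.cosh_pos x)]
  exact Real.sinh_lt_cosh x

private lemma pow4_pos {t : ℝ} (ht : t ≠ 0) : 0 < t ^ 4 :=
  lt_of_le_of_ne (by positivity) (Ne.symm (pow_ne_zero 4 ht))

private lemma tanh_div_pow4_lim :
    Tendsto (fun t : ℝ => Real.tanh (t ^ 4) / t ^ 4) (𝓝[≠] (0 : ℝ)) (𝓝 1) := by
  have hd : HasDerivAt Real.tanh 1 0 := by
    have h := (Real.hasDerivAt_sinh 0).div (Real.hasDerivAt_cosh 0) (Real.cosh_pos 0).ne'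
    have h2 : Real.tanh = fun y : ℝ => Real.sinh y / Real.cosh y :=
      funext Real.tanh_eq_sinh_div_cosh
    rw [h2]
    simp at h
    exact h
  have hslope : Tendsto (fun y : ℝ => Real.tanh y / y) (𝓝[≠] (0 : ℝ)) (𝓝 1) := by
    have h := hasDerivAt_iff_tendsto_slope.mp hd
    apply h.congr
    intro y
    simp [slope_def_field, Real.tanh_zero]
  have hq : Tendsto (fun t : ℝ => t ^ 4) (𝓝[≠] (0 : ℝ)) (𝓝[≠] (0 : ℝ)) := by
    rw [tendsto_nhdsWithin_iff]
    constructor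
    · have h : Tendsto (fun t : ℝ => t ^ 4) (𝓝 (0 : ℝ)) (𝓝 (0 : ℝ)) := by
        simpa using (continuous_pow 4).tendsto (0 : ℝ)
      exact h.mono_left nhdsWithin_le_nhds
    · filter_upwards [self_mem_nhdsWithin] with t ht
      exact pow_ne_zero 4 ht
  exact hslope.comp hq

/-- The function g₁(h) = √(tanh(h⁴)) is real-analytic on the whole real line, and
it is not a polynomial function. -/
theorem g1_analytic_and_not_polynomial :
    (∀ h : ℝ, AnalyticAt ℝ (fun t : ℝ => Real.sqrt (Real.tanh (t ^ 4))) h) ∧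
    ¬ ∃ p : Polynomial ℝ, ∀ h : ℝ, Real.sqrt (Real.tanh (h ^ 4)) = p.eval h := by
  constructor
  · intro h
    rcases eq_or_ne h 0 with rfl | hne
    · -- the point h = 0
      have hp4 : AnalyticAt ℝ (fun t : ℝ => t ^ 4) (0 : ℝ) := by
        exact analyticAt_id.pow 4
      have hf : AnalyticAt ℝ (fun t : ℝ => Real.tanh (t ^ 4)) 0 := by
        exact (analyticAt_rtanh _).comp hp4
      have hfne : ¬ ∀ᶠ t in 𝓝 (0 : ℝ), Real.tanh (t ^ 4) = 0 := by
        intro hev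
        have h1 : ∀ᶠ t in 𝓝[≠] (0 : ℝ), Real.tanh (t ^ 4) ≠ 0 := by
          filter_upwards [self_mem_nhdsWithin] with t ht
          exact (rtanh_pos (pow4_pos ht)).ne'
        obtain ⟨t, h2, h3⟩ := (h1.and (hev.filter_mono nhdsWithin_le_nhds)).exists
        exact h2 h3
      obtain ⟨n, g, hg, hg0, heq⟩ := hf.exists_eventuallyEq_pow_smul_nonzero_iff.mpr hfne
      simp only [sub_zero, smul_eq_mul] at heq
      have hglim : Tendsto (fun t : ℝ => Real.tanh (t ^ 4) / t ^ n) (𝓝[≠] (0 : ℝ))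
          (𝓝 (g 0)) := by
        have hgc : Tendsto g (𝓝[≠] (0 : ℝ)) (𝓝 (g 0)) :=
          hg.continuousAt.tendsto.mono_left nhdsWithin_le_nhds
        apply hgc.congr'
        filter_upwards [heq.filter_mono nhdsWithin_le_nhds, self_mem_nhdsWithin] with t h1 h2
        rw [h1, mul_div_cancel_left₀ _ (pow_ne_zero n h2)]
      have hn4 : n = 4 := by
        by_contra hne4
        rcases lt_or_gt_of_ne hne4 with hlt | hgt
        · -- n < 4 : then tanh(t⁴)/tⁿ → 0, contradicting g 0 ≠ 0
          have h2 : Tendsto (fun t : ℝ => t ^ (4 - n)) (𝓝[≠] (0 : ℝ)) (𝓝 0) := by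
            have h3 : Tendsto (fun t : ℝ => t ^ (4 - n)) (𝓝 (0 : ℝ))
                (𝓝 ((0 : ℝ) ^ (4 - n))) := (continuous_pow _).tendsto 0
            rw [zero_pow (by omega : 4 - n ≠ 0)] at h3
            exact h3.mono_left nhdsWithin_le_nhds
          have key : Tendsto (fun t : ℝ => Real.tanh (t ^ 4) / t ^ n) (𝓝[≠] (0 : ℝ))
              (𝓝 0) := by
            have h4 := tanh_div_pow4_lim.mul h2
            rw [mul_zero] at h4
            apply h4.congr'
            filter_upwards [self_mem_nhdsWithin] with t ht
            rw [div_mul_eq_mul_div, div_eq_div_iff (pow_ne_zero 4 ht) (pow_ne_zero n ht),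
              mul_assoc, ← pow_add, Nat.sub_add_cancel hlt.le]
          exact hg0 (tendsto_nhds_unique hglim key)
        · -- n > 4 : then tanh(t⁴)/t⁴ → 0, contradicting the limit 1
          have h2 : Tendsto (fun t : ℝ => t ^ (n - 4)) (𝓝[≠] (0 : ℝ)) (𝓝 0) := by
            have h3 : Tendsto (fun t : ℝ => t ^ (n - 4)) (𝓝 (0 : ℝ))
                (𝓝 ((0 : ℝ) ^ (n - 4))) := (continuous_pow _).tendsto 0
            rw [zero_pow (by omega : n - 4 ≠ 0)] at h3
            exact h3.mono_left nhdsWithin_le_nhds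
          have key : Tendsto (fun t : ℝ => Real.tanh (t ^ 4) / t ^ 4) (𝓝[≠] (0 : ℝ))
              (𝓝 0) := by
            have h4 := hglim.mul h2
            rw [mul_zero] at h4
            apply h4.congr'
            filter_upwards [self_mem_nhdsWithin] with t ht
            rw [div_mul_eq_mul_div, div_eq_div_iff (pow_ne_zero n ht) (pow_ne_zero 4 ht),
              mul_assoc, ← pow_add, Nat.sub_add_cancel hgt.le]
          exact one_ne_zero (tendsto_nhds_unique tanh_div_pow4_lim key)
      subst hn4
      have hg1 : g 0 = 1 := tendsto_nhds_unique hglim tanh_div_pow4_lim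
      have hsqrtg : AnalyticAt ℝ (fun t : ℝ => t ^ 2 * Real.sqrt (g t)) 0 :=
        (analyticAt_id.pow 2).mul
          ((analyticAt_rsqrt (by rw [hg1]; norm_num)).comp hg)
      apply hsqrtg.congr
      filter_upwards [heq] with t h1
      rw [h1, Real.sqrt_mul (by positivity : (0:ℝ) ≤ t ^ 4) (g t),
        show (t : ℝ) ^ 4 = (t ^ 2) ^ 2 by ring, Real.sqrt_sq (by positivity : (0:ℝ) ≤ t ^ 2)]
    · -- the point h ≠ 0
      have hp4 : AnalyticAt ℝ (fun t : ℝ => t ^ 4) h := by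
        exact analyticAt_id.pow 4
      have htanh : AnalyticAt ℝ (fun t : ℝ => Real.tanh (t ^ 4)) h := by
        exact (analyticAt_rtanh _).comp hp4
      have hsq : AnalyticAt ℝ Real.sqrt (Real.tanh (h ^ 4)) :=
        analyticAt_rsqrt (rtanh_pos (pow4_pos hne))
      exact AnalyticAt.comp (f := fun t : ℝ => Real.tanh (t ^ 4)) hsq htanh
  · rintro ⟨p, hp⟩
    have hb : ∀ x : ℝ, |Polynomial.eval x p| ≤ 1 := by
      intro x
      rw [← hp x, abs_of_nonneg (Real.sqrt_nonneg _)]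
      exact Real.sqrt_le_one.mpr (rtanh_lt_one _).le
    by_cases hdeg : 0 < p.degree
    · obtain ⟨x, hx⟩ := ((Polynomial.abs_tendsto_atTop p hdeg).eventually_gt_atTop 1).exists
      exact absurd (hb x) (not_le.mpr hx)
    · have hc := Polynomial.eq_C_of_degree_le_zero (not_lt.mp hdeg)
      have h0 := hp 0
      have h1 := hp 1
      rw [hc] at h0 h1
      have hc0 : p.coeff 0 = 0 := by simpa [Real.tanh_zero] using h0.symm
      have hpos : (0 : ℝ) < Real.sqrt (Real.tanh ((1 : ℝ) ^ 4)) :=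
        Real.sqrt_pos.mpr (rtanh_pos (by norm_num))
      rw [h1] at hpos
      simp [hc0] at hpos
end

section
/- (Perturbed transversality.) Let 0 < h₁ < h₂, let S ⊂ {1,2,3,…} be finite with ν := |S|, let k₀* ∈ ℕ, ρ₀ > 0 and C > 0. Write Ω_j(h) := (j·tanh(h·j))^{1/2} and ω(h) := (Ω_i(h))_{i∈S}. Assume the unperturbed transversality conditions hold: for all h ∈ [h₁,h₂], (0) max_{k≤k₀*}|∂_h^k(ω(h)·ℓ)| ≥ ρ₀⟨ℓ⟩ for all ℓ ∈ ℤ^S∖{0}; (I) max_{k≤k₀*}|∂_h^k(ω(h)·ℓ + Ω_j(h))| ≥ ρ₀⟨ℓ⟩ for all ℓ ∈ ℤ^S and j ∈ ℕ⁺∖S; (II−) max_{k≤k₀*}|∂_h^k(ω(h)·ℓ + Ω_j(h) − Ω_{j'}(h))| ≥ ρ₀⟨ℓ⟩ for all ℓ ∈ ℤ^S∖{0} and j,j' ∈ ℕ⁺∖S; (II+) max_{k≤k₀*}|∂_h^k(ω(h)·ℓ + Ω_j(h) + Ω_{j'}(h))| ≥ ρ₀⟨ℓ⟩ for all ℓ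 ∈ ℤ^S and j,j' ∈ ℕ⁺∖S. Then there exists δ₀ > 0, depending only on h₁, h₂, k₀*, ρ₀, C and ν, with the following property. Let 0 < δ ≤ δ₀ and let ω_ε : [h₁,h₂] → ℝ^S, m : [h₁,h₂] → ℝ, and r_j : [h₁,h₂] → ℝ (for j ∈ ℕ⁺∖S) be k₀*-times continuously differentiable functions satisfying, for all 0 ≤ k ≤ k₀* and all h ∈ [h₁,h₂]: max_{i∈S}|∂_h^k(ω_ε − ω)_i(h)| ≤ δ, |∂_h^k(m(h) − 1)| ≤ δ, and √j·|∂_h^k r_j(h)| ≤ δ for all j ∈ ℕ⁺∖S. Set μ_j(h) := m(h)·Ω_j(h) + r_j(h). Then for all h ∈ [h₁,h₂]: (0') max_{k≤k₀*}|∂_h^k(ω_ε(h)·ℓ)| ≥ (ρ₀/2)⟨ℓ⟩ for all ℓ ∈ ℤ^S∖{0}; (I') max_{k≤k₀*}|∂_h^k(ω_ε(h)·ℓ + μ_j(h))| ≥ (ρ₀/2)⟨ℓ⟩ for all ℓ ∈ ℤ^S and j ∈ ℕ⁺∖S with √j ≤ C⟨ℓ⟩; (II−') max_{k≤k₀*}|∂_h^k(ω_ε(h)·ℓ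 + μ_j(h) − μ_{j'}(h))| ≥ (ρ₀/2)⟨ℓ⟩ for all ℓ ∈ ℤ^S∖{0} and j,j' ∈ ℕ⁺∖S with |√j − √j'| ≤ C⟨ℓ⟩; (II+') max_{k≤k₀*}|∂_h^k(ω_ε(h)·ℓ + μ_j(h) + μ_{j'}(h))| ≥ (ρ₀/2)⟨ℓ⟩ for all ℓ ∈ ℤ^S and j,j' ∈ ℕ⁺∖S with √j + √j' ≤ C⟨ℓ⟩. -/
/-- The linear frequency Ω_j(h) = √(j tanh(h j)) of the gravity water waves system. -/
noncomputable def freq (j : ℕ) (h : ℝ) : ℝ := Real.sqrt ((j : ℝ) * Real.tanh (h * (j : ℝ)))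

/-- ⟨ℓ⟩ := max{1, max_{i ∈ S} |ℓ_i|} for an integer vector ℓ indexed by the finite set S. -/
noncomputable def brak (S : Finset ℕ) (ℓ : ℕ → ℤ) : ℝ :=
  ((max 1 (S.sup fun i => (ℓ i).natAbs) : ℕ) : ℝ)


open Set Filter Real ContDiff Topology

lemma iDW_eq (n : ℕ) {s : Set ℝ} (hs : IsOpen s) {x : ℝ} (hx : x ∈ s) (f : ℝ → ℝ) :
    iteratedDerivWithin n f s x = iteratedDeriv n f x := by
  rw [iteratedDerivWithin, iteratedDeriv, iteratedFDerivWithin_of_isOpen n hs hx]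

example (k : ℕ) : ((k : ℕ∞) : WithTop ℕ∞) ≤ ∞ := by exact_mod_cast le_top

example (k : ℕ) {f : ℝ → ℝ} {s : Set ℝ} (h : ContDiffOn ℝ ∞ f s) : ContDiffOn ℝ k f s := by
  exact h.of_le (by exact_mod_cast le_top)

lemma tanh_formula (x : ℝ) :
    Real.tanh x = (1 - Real.exp (-(2*x))) / (1 + Real.exp (-(2*x))) := by
  rw [Real.tanh_eq_sinh_div_cosh, Real.sinh_eq, Real.cosh_eq]
  have h1 : Real.exp x > 0 := Real.exp_pos x
  have h2 : (0:ℝ) < 1 + Real.exp (-(2*x)) := by positivity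
  have key : Real.exp (-(2*x)) = Real.exp (-x) * Real.exp (-x) := by
    rw [← Real.exp_add]; ring_nf
  have key2 : Real.exp x * Real.exp (-x) = 1 := by rw [← Real.exp_add]; simp
  have h3 : Real.exp x + Real.exp (-x) > 0 := by positivity
  rw [div_eq_div_iff (by positivity) h2.ne']
  nlinarith [key, key2]

noncomputable def psi0 : ℝ → ℝ := fun q => Real.sqrt ((1 - q) / (1 + q))

lemma psi0_smooth : ContDiffOn ℝ ∞ psi0 (Ioo (-1:ℝ) 1) := by
  intro q hq
  have h1 : (0:ℝ) < 1 + q := by linarith [hq.1]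
  have h2 : (0:ℝ) < 1 - q := by linarith [hq.2]
  have h3 : (0:ℝ) < (1 - q)/(1 + q) := div_pos h2 h1
  exact ((Real.contDiffAt_sqrt h3.ne').comp q
    ((contDiffAt_const.sub contDiffAt_id).div
      (contDiffAt_const.add contDiffAt_id) h1.ne')).contDiffWithinAt

lemma psi0_zero : psi0 0 = 1 := by simp [psi0]

lemma freq_eq (j : ℕ) (t : ℝ) :
    freq j t = Real.sqrt j * psi0 (Real.exp (-(2*(t*(j:ℝ))))) := by
  have hjR : (0:ℝ) ≤ (j:ℝ) := by positivity
  rw [freq, Real.sqrt_mul hjR, psi0, tanh_formula]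

lemma exp_mem_Ioo {t : ℝ} (ht : 0 < t) (j : ℕ) (hj : 1 ≤ j) :
    Real.exp (-(2*(t*(j:ℝ)))) ∈ Ioo (-1:ℝ) 1 := by
  have hjR : (0:ℝ) < (j:ℝ) := by exact_mod_cast hj
  constructor
  · linarith [Real.exp_pos (-(2*(t*(j:ℝ))))]
  · apply Real.exp_lt_one_iff.mpr; nlinarith

lemma freq_rep (n : ℕ) : ∃ Ψ : ℝ → ℝ,
    ContDiffOn ℝ ∞ Ψ (Ioo (-1:ℝ) 1) ∧ (1 ≤ n → Ψ 0 = 0) ∧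
    ∀ j : ℕ, 1 ≤ j → ∀ t : ℝ, 0 < t →
      iteratedDeriv n (freq j) t = Real.sqrt j * (j:ℝ)^n * Ψ (Real.exp (-(2*(t*(j:ℝ))))) := by
  induction n with
  | zero =>
    exact ⟨psi0, psi0_smooth, by omega, fun j hj t ht => by
      simpa using freq_eq j t⟩
  | succ n ih =>
    obtain ⟨Ψ, hΨ, -, hrep⟩ := ih
    have hinf : ContDiffOn ℝ ∞ (deriv Ψ) (Ioo (-1:ℝ) 1) :=
      hΨ.deriv_of_isOpen isOpen_Ioo (by rw [show ∞ + 1 = ∞ from rfl])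
    refine ⟨fun q => (-2) * (q * deriv Ψ q), ?_, fun _ => by simp, ?_⟩
    · exact contDiffOn_const.mul (contDiffOn_id.mul hinf)
    · intro j hj t ht
      have hjR : (0:ℝ) < (j:ℝ) := by exact_mod_cast hj
      set q : ℝ := Real.exp (-(2*(t*(j:ℝ)))) with hq_def
      have hq : q ∈ Ioo (-1:ℝ) 1 := exp_mem_Ioo ht j hj
      have heq : iteratedDeriv n (freq j) =ᶠ[𝓝 t]
          (fun u => Real.sqrt j * (j:ℝ)^n * Ψ (Real.exp (-(2*(u*(j:ℝ)))))) :=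
        eventuallyEq_of_mem (isOpen_Ioi.mem_nhds ht) (fun u hu => hrep j hj u hu)
      rw [iteratedDeriv_succ, heq.deriv_eq]
      have hinner : HasDerivAt (fun u : ℝ => -(2*(u*(j:ℝ)))) (-(2*(j:ℝ))) t := by
        simpa using (((hasDerivAt_id t).mul_const (j:ℝ)).const_mul (2:ℝ)).fun_neg
      have hexp : HasDerivAt (fun u : ℝ => Real.exp (-(2*(u*(j:ℝ)))))
          (q * (-(2*(j:ℝ)))) t := hinner.exp
      have hΨd : DifferentiableAt ℝ Ψ q :=
        (hΨ.differentiableOn (by simp)).differentiableAt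
          (isOpen_Ioo.mem_nhds hq)
      have hcomp : HasDerivAt (fun u => Ψ (Real.exp (-(2*(u*(j:ℝ))))))
          (deriv Ψ q * (q * (-(2*(j:ℝ))))) t := by
        exact (hΨd.hasDerivAt.comp t hexp)
      rw [(hcomp.const_mul (Real.sqrt j * (j:ℝ)^n)).deriv]
      rw [pow_succ]; ring

lemma bound_near_zero {Ψ : ℝ → ℝ} (hΨ : ContDiffOn ℝ ∞ Ψ (Ioo (-1:ℝ) 1))
    {q₀ : ℝ} (hq₀ : q₀ ∈ Ioo (0:ℝ) 1) :
    ∃ L, 0 ≤ L ∧ ∀ q ∈ Icc (0:ℝ) q₀, |Ψ q - Ψ 0| ≤ L * q := by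
  have hsub : Icc (0:ℝ) q₀ ⊆ Ioo (-1:ℝ) 1 := fun x hx =>
    ⟨by have := hx.1; linarith, by have := hx.2; have := hq₀.2; linarith⟩
  have hder : ContinuousOn (deriv Ψ) (Icc (0:ℝ) q₀) :=
    ((hΨ.deriv_of_isOpen isOpen_Ioo (by rw [show ∞ + 1 = ∞ from rfl])).continuousOn).mono hsub
  obtain ⟨L, hL⟩ := IsCompact.exists_bound_of_continuousOn isCompact_Icc hder
  have h0mem : (0:ℝ) ∈ Icc (0:ℝ) q₀ := ⟨le_refl _, le_of_lt hq₀.1⟩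
  have hL0 : 0 ≤ L := le_trans (norm_nonneg _) (hL 0 h0mem)
  refine ⟨L, hL0, fun q hq => ?_⟩
  have hdiff : ∀ x ∈ Icc (0:ℝ) q₀, DifferentiableAt ℝ Ψ x := fun x hx =>
    (hΨ.differentiableOn (by simp)).differentiableAt
      (isOpen_Ioo.mem_nhds (hsub hx))
  have := (convex_Icc (0:ℝ) q₀).norm_image_sub_le_of_norm_deriv_le hdiff hL h0mem hq
  simpa [Real.norm_eq_abs, abs_of_nonneg hq.1] using this

lemma poly_exp_bound (c : ℝ) (hc : 0 < c) (n : ℕ) :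
    ∃ B, ∀ j : ℕ, (j:ℝ)^n * Real.exp (-(c*j)) ≤ B := by
  have h1 : Tendsto (fun x : ℝ => x^n * Real.exp (-x)) atTop (𝓝 0) :=
    tendsto_pow_mul_exp_neg_atTop_nhds_zero n
  have h2 : Tendsto (fun j : ℕ => c*(j:ℝ)) atTop atTop :=
    (tendsto_natCast_atTop_atTop (R := ℝ)).const_mul_atTop hc
  have h3 := (h1.comp h2).const_mul (1/c^n)
  have h4 : Tendsto (fun j : ℕ => (j:ℝ)^n * Real.exp (-(c*j))) atTop (𝓝 ((1/c^n) * 0)) := by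
    convert h3 using 2 with j
    simp only [Function.comp]
    rw [mul_pow]
    field_simp
  obtain ⟨B, hB⟩ := h4.bddAbove_range
  exact ⟨B, fun j => hB ⟨j, rfl⟩⟩

lemma tanh_le_one (x : ℝ) : Real.tanh x ≤ 1 := by
  rw [tanh_formula, div_le_one (by positivity)]
  linarith [Real.exp_pos (-(2*x))]

lemma sqrt_le_j {j : ℕ} (hj : 1 ≤ j) : Real.sqrt j ≤ (j:ℝ) := by
  have hjR : (1:ℝ) ≤ (j:ℝ) := by exact_mod_cast hj
  calc Real.sqrt j ≤ Real.sqrt ((j:ℝ)^2) := Real.sqrt_le_sqrt (by nlinarith)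
    _ = (j:ℝ) := Real.sqrt_sq (by positivity)

lemma freq_le (j : ℕ) (t : ℝ) : |freq j t| ≤ Real.sqrt j := by
  rw [freq, abs_of_nonneg (Real.sqrt_nonneg _)]
  apply Real.sqrt_le_sqrt
  calc (j:ℝ) * Real.tanh (t*(j:ℝ)) ≤ (j:ℝ) * 1 :=
        mul_le_mul_of_nonneg_left (tanh_le_one _) (by positivity)
    _ = (j:ℝ) := mul_one _

lemma one_le_sqrt_j {j : ℕ} (hj : 1 ≤ j) : 1 ≤ Real.sqrt j := by
  rw [show (1:ℝ) = Real.sqrt 1 by simp]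
  exact Real.sqrt_le_sqrt (by exact_mod_cast hj)

lemma freq_master_bound (h₁ : ℝ) (hh₁ : 0 < h₁) (k₀ : ℕ) :
    ∃ M : ℝ, 0 ≤ M ∧
      (∀ n, 1 ≤ n → n ≤ k₀ → ∀ j : ℕ, 1 ≤ j → ∀ t : ℝ, h₁ ≤ t →
        |iteratedDeriv n (freq j) t| ≤ M) ∧
      (∀ j : ℕ, 1 ≤ j → ∀ t : ℝ, h₁ ≤ t → |freq j t - Real.sqrt j| ≤ M) := by
  set q₀ : ℝ := Real.exp (-(2*h₁)) with hq₀def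
  have hq₀ : q₀ ∈ Ioo (0:ℝ) 1 :=
    ⟨Real.exp_pos _, Real.exp_lt_one_iff.mpr (by linarith)⟩
  have hqmem : ∀ (j : ℕ), 1 ≤ j → ∀ t : ℝ, h₁ ≤ t →
      Real.exp (-(2*(t*(j:ℝ)))) ∈ Icc (0:ℝ) q₀ := by
    intro j hj t ht
    have hjR : (1:ℝ) ≤ (j:ℝ) := by exact_mod_cast hj
    refine ⟨le_of_lt (Real.exp_pos _), Real.exp_le_exp.mpr ?_⟩
    nlinarith
  have hqle : ∀ (j : ℕ), 1 ≤ j → ∀ t : ℝ, h₁ ≤ t →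
      Real.exp (-(2*(t*(j:ℝ)))) ≤ Real.exp (-((2*h₁)*(j:ℝ))) := by
    intro j hj t ht
    have hjR : (1:ℝ) ≤ (j:ℝ) := by exact_mod_cast hj
    apply Real.exp_le_exp.mpr; nlinarith
  -- bound for each derivative order n ≥ 1
  have main : ∀ n : ℕ, ∃ Mn : ℝ, 0 ≤ Mn ∧ (1 ≤ n → ∀ j : ℕ, 1 ≤ j → ∀ t : ℝ, h₁ ≤ t →
      |iteratedDeriv n (freq j) t| ≤ Mn) := by
    intro n
    obtain ⟨Ψ, hΨ, h0, hrep⟩ := freq_rep n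
    obtain ⟨L, hL0, hL⟩ := bound_near_zero hΨ hq₀
    obtain ⟨B, hB⟩ := poly_exp_bound (2*h₁) (by linarith) (n+1)
    have hB0 : 0 ≤ B := le_trans (by norm_num) (hB 0)
    refine ⟨L * B, mul_nonneg hL0 hB0, fun hn j hj t ht => ?_⟩
    have hjR : (1:ℝ) ≤ (j:ℝ) := by exact_mod_cast hj
    have ht0 : 0 < t := lt_of_lt_of_le hh₁ ht
    rw [hrep j hj t ht0]
    set q : ℝ := Real.exp (-(2*(t*(j:ℝ)))) with hqdef
    have hq : q ∈ Icc (0:ℝ) q₀ := hqmem j hj t ht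
    have h1 : |Real.sqrt j * (j:ℝ)^n * Ψ q| ≤ Real.sqrt j * (j:ℝ)^n * (L * q) := by
      rw [abs_mul]
      rw [abs_of_nonneg (show (0:ℝ) ≤ Real.sqrt j * (j:ℝ)^n by positivity)]
      apply mul_le_mul_of_nonneg_left _ (by positivity)
      have hLq := hL q hq
      rw [h0 hn, sub_zero] at hLq
      exact hLq
    refine le_trans h1 ?_
    have hsq : Real.sqrt j ≤ (j:ℝ) := sqrt_le_j hj
    calc Real.sqrt j * (j:ℝ)^n * (L * q) ≤ (j:ℝ) * (j:ℝ)^n * (L * q) := by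
          apply mul_le_mul_of_nonneg_right _ (by positivity)
          apply mul_le_mul_of_nonneg_right hsq (by positivity)
      _ = L * ((j:ℝ)^(n+1) * q) := by ring
      _ ≤ L * ((j:ℝ)^(n+1) * Real.exp (-((2*h₁)*(j:ℝ)))) := by
          apply mul_le_mul_of_nonneg_left _ hL0
          apply mul_le_mul_of_nonneg_left (hqle j hj t ht) (by positivity)
      _ ≤ L * B := mul_le_mul_of_nonneg_left (hB j) hL0
  -- the zeroth order difference bound
  have diffb : ∃ M0 : ℝ, 0 ≤ M0 ∧ ∀ j : ℕ, 1 ≤ j → ∀ t : ℝ, h₁ ≤ t →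
      |freq j t - Real.sqrt j| ≤ M0 := by
    obtain ⟨L, hL0, hL⟩ := bound_near_zero psi0_smooth hq₀
    obtain ⟨B, hB⟩ := poly_exp_bound (2*h₁) (by linarith) 1
    have hB0 : 0 ≤ B := le_trans (by norm_num) (hB 0)
    refine ⟨L * B, mul_nonneg hL0 hB0, fun j hj t ht => ?_⟩
    have hjR : (1:ℝ) ≤ (j:ℝ) := by exact_mod_cast hj
    have ht0 : 0 < t := lt_of_lt_of_le hh₁ ht
    rw [freq_eq j t]
    set q : ℝ := Real.exp (-(2*(t*(j:ℝ)))) with hqdef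
    have hq : q ∈ Icc (0:ℝ) q₀ := hqmem j hj t ht
    have h1 : |Real.sqrt j * psi0 q - Real.sqrt j| = Real.sqrt j * |psi0 q - psi0 0| := by
      rw [psi0_zero,
        show Real.sqrt j * psi0 q - Real.sqrt j = Real.sqrt j * (psi0 q - 1) by ring,
        abs_mul, abs_of_nonneg (Real.sqrt_nonneg _)]
    rw [h1]
    have hsq : Real.sqrt j ≤ (j:ℝ) := sqrt_le_j hj
    calc Real.sqrt j * |psi0 q - psi0 0| ≤ (j:ℝ) * (L * q) := by
          apply mul_le_mul hsq (hL q hq) (abs_nonneg _) (by positivity)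
      _ = L * ((j:ℝ)^1 * q) := by ring
      _ ≤ L * ((j:ℝ)^1 * Real.exp (-((2*h₁)*(j:ℝ)))) := by
          apply mul_le_mul_of_nonneg_left _ hL0
          apply mul_le_mul_of_nonneg_left (hqle j hj t ht) (by positivity)
      _ ≤ L * B := mul_le_mul_of_nonneg_left (hB j) hL0
  choose G hG0 hG using main
  obtain ⟨M0, hM00, hM0⟩ := diffb
  have hsum0 : (0:ℝ) ≤ ∑ m ∈ Finset.range (k₀+1), G m :=
    Finset.sum_nonneg (fun m _ => hG0 m)
  refine ⟨M0 + ∑ n ∈ Finset.range (k₀+1), G n, by linarith, ?_, ?_⟩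
  · intro n hn hnk j hj t ht
    have h1 : G n ≤ ∑ m ∈ Finset.range (k₀+1), G m :=
      Finset.single_le_sum (fun m _ => hG0 m) (Finset.mem_range.mpr (by omega))
    have := hG n hn j hj t ht
    linarith
  · intro j hj t ht
    have h2 : (0:ℝ) ≤ ∑ m ∈ Finset.range (k₀+1), G m :=
      Finset.sum_nonneg (fun m _ => hG0 m)
    have := hM0 j hj t ht
    linarith

lemma freq_smooth (j : ℕ) (hj : 1 ≤ j) : ContDiffOn ℝ ∞ (freq j) (Ioi (0:ℝ)) := by
  have hinner : ContDiff ℝ ∞ (fun t : ℝ => Real.exp (-(2*(t*(j:ℝ))))) :=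
    Real.contDiff_exp.comp ((contDiff_const.mul (contDiff_id.mul contDiff_const)).neg)
  have hmaps : MapsTo (fun t : ℝ => Real.exp (-(2*(t*(j:ℝ))))) (Ioi (0:ℝ)) (Ioo (-1:ℝ) 1) :=
    fun t ht => exp_mem_Ioo ht j hj
  have hcomp : ContDiffOn ℝ ∞
      (fun t : ℝ => Real.sqrt j * psi0 (Real.exp (-(2*(t*(j:ℝ)))))) (Ioi (0:ℝ)) :=
    contDiffOn_const.mul (psi0_smooth.comp hinner.contDiffOn hmaps)
  exact hcomp.congr (fun t _ => freq_eq j t)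

lemma iDW_add' {s : Set ℝ} {x : ℝ} (hx : x ∈ s) (hsu : UniqueDiffOn ℝ s) {n : ℕ} {f g : ℝ → ℝ}
    (hf : ContDiffOn ℝ n f s) (hg : ContDiffOn ℝ n g s) :
    iteratedDerivWithin n (fun t => f t + g t) s x
      = iteratedDerivWithin n f s x + iteratedDerivWithin n g s x :=
  iteratedDerivWithin_add hx hsu (hf.contDiffWithinAt hx) (hg.contDiffWithinAt hx)

lemma iDW_sub' {s : Set ℝ} {x : ℝ} (hx : x ∈ s) (hsu : UniqueDiffOn ℝ s) {n : ℕ} {f g : ℝ → ℝ}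
    (hf : ContDiffOn ℝ n f s) (hg : ContDiffOn ℝ n g s) :
    iteratedDerivWithin n (fun t => f t - g t) s x
      = iteratedDerivWithin n f s x - iteratedDerivWithin n g s x :=
  iteratedDerivWithin_sub hx hsu (hf.contDiffWithinAt hx) (hg.contDiffWithinAt hx)

lemma iDW_zero_fun {s : Set ℝ} (hsu : UniqueDiffOn ℝ s) {x : ℝ} (hx : x ∈ s) (n : ℕ) :
    iteratedDerivWithin n (fun _ : ℝ => (0:ℝ)) s x = 0 := by
  rw [iteratedDerivWithin, iteratedFDerivWithin_zero_fun]
  simp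

lemma iDW_sum {s : Set ℝ} (hsu : UniqueDiffOn ℝ s) {x : ℝ} (hx : x ∈ s) (n : ℕ)
    (T : Finset ℕ) (F : ℕ → ℝ → ℝ) (hF : ∀ i ∈ T, ContDiffOn ℝ n (F i) s) :
    iteratedDerivWithin n (fun t => ∑ i ∈ T, F i t) s x
      = ∑ i ∈ T, iteratedDerivWithin n (F i) s x := by
  classical
  induction T using Finset.induction with
  | empty => simpa using iDW_zero_fun hsu hx n
  | @insert a T ha ih =>
    have h1 : (fun t => ∑ i ∈ insert a T, F i t) = (fun t => F a t + ∑ i ∈ T, F i t) := by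
      funext t; rw [Finset.sum_insert ha]
    rw [h1, Finset.sum_insert ha, ← ih (fun i hi => hF i (Finset.mem_insert_of_mem hi))]
    exact iDW_add' hx hsu (hF a (Finset.mem_insert_self a T))
      (ContDiffOn.sum fun i hi => hF i (Finset.mem_insert_of_mem hi))

lemma one_le_brak (S : Finset ℕ) (ℓ : ℕ → ℤ) : 1 ≤ brak S ℓ := by
  rw [brak]; exact_mod_cast le_max_left 1 _

lemma abs_le_brak {S : Finset ℕ} (ℓ : ℕ → ℤ) {i : ℕ} (hi : i ∈ S) :
    |(ℓ i : ℝ)| ≤ brak S ℓ := by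
  rw [brak, ← Int.cast_abs, Int.abs_eq_natAbs]
  have h1 : (ℓ i).natAbs ≤ max 1 (S.sup fun i => (ℓ i).natAbs) :=
    le_trans (Finset.le_sup (f := fun i => (ℓ i).natAbs) hi) (le_max_right _ _)
  exact_mod_cast h1


set_option maxHeartbeats 2000000 in
/-- Perturbed transversality: the transversality estimates for the unperturbed frequencies
are stable under perturbations that are δ-small, together with their h-derivatives up to
order k₀*, provided δ ≤ δ₀ with δ₀ small enough; the perturbed estimates hold with
constant ρ₀/2, restricted to indices satisfying √j ≤ C⟨ℓ⟩, |√j−√j'| ≤ C⟨ℓ⟩, √j+√j' ≤ C⟨ℓ⟩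
respectively. -/
theorem perturbed_transversality (h₁ h₂ : ℝ) (hh₁ : 0 < h₁) (hh : h₁ < h₂)
    (S : Finset ℕ) (hS : ∀ i ∈ S, 1 ≤ i) (k₀ : ℕ) (ρ₀ C : ℝ) (hρ₀ : 0 < ρ₀) (hC : 0 < C)
    (H0 : ∀ h ∈ Set.Icc h₁ h₂, ∀ ℓ : ℕ → ℤ, (∃ i ∈ S, ℓ i ≠ 0) →
      ∃ k ≤ k₀, ρ₀ * brak S ℓ ≤
        |iteratedDeriv k (fun t => ∑ i ∈ S, (ℓ i : ℝ) * freq i t) h|)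
    (HI : ∀ h ∈ Set.Icc h₁ h₂, ∀ ℓ : ℕ → ℤ, ∀ j : ℕ, 1 ≤ j → j ∉ S →
      ∃ k ≤ k₀, ρ₀ * brak S ℓ ≤
        |iteratedDeriv k (fun t => (∑ i ∈ S, (ℓ i : ℝ) * freq i t) + freq j t) h|)
    (HIIminus : ∀ h ∈ Set.Icc h₁ h₂, ∀ ℓ : ℕ → ℤ, (∃ i ∈ S, ℓ i ≠ 0) →
      ∀ j j' : ℕ, 1 ≤ j → j ∉ S → 1 ≤ j' → j' ∉ S →
      ∃ k ≤ k₀, ρ₀ * brak S ℓ ≤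
        |iteratedDeriv k (fun t => (∑ i ∈ S, (ℓ i : ℝ) * freq i t) + freq j t - freq j' t) h|)
    (HIIplus : ∀ h ∈ Set.Icc h₁ h₂, ∀ ℓ : ℕ → ℤ, ∀ j j' : ℕ, 1 ≤ j → j ∉ S → 1 ≤ j' → j' ∉ S →
      ∃ k ≤ k₀, ρ₀ * brak S ℓ ≤
        |iteratedDeriv k (fun t => (∑ i ∈ S, (ℓ i : ℝ) * freq i t) + freq j t + freq j' t) h|) :
    ∃ δ₀ : ℝ, 0 < δ₀ ∧ ∀ δ : ℝ, 0 < δ → δ ≤ δ₀ →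
      ∀ (ωε : ℕ → ℝ → ℝ) (m : ℝ → ℝ) (r : ℕ → ℝ → ℝ),
        (∀ i ∈ S, ContDiff ℝ k₀ (ωε i)) →
        ContDiff ℝ k₀ m →
        (∀ j : ℕ, 1 ≤ j → j ∉ S → ContDiff ℝ k₀ (r j)) →
        (∀ k ≤ k₀, ∀ h ∈ Set.Icc h₁ h₂, ∀ i ∈ S,
          |iteratedDeriv k (fun t => ωε i t - freq i t) h| ≤ δ) →
        (∀ k ≤ k₀, ∀ h ∈ Set.Icc h₁ h₂,
          |iteratedDeriv k (fun t => m t - 1) h| ≤ δ) →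
        (∀ k ≤ k₀, ∀ h ∈ Set.Icc h₁ h₂, ∀ j : ℕ, 1 ≤ j → j ∉ S →
          Real.sqrt j * |iteratedDeriv k (r j) h| ≤ δ) →
        ∀ h ∈ Set.Icc h₁ h₂,
          (∀ ℓ : ℕ → ℤ, (∃ i ∈ S, ℓ i ≠ 0) →
            ∃ k ≤ k₀, ρ₀ / 2 * brak S ℓ ≤
              |iteratedDeriv k (fun t => ∑ i ∈ S, (ℓ i : ℝ) * ωε i t) h|) ∧
          (∀ ℓ : ℕ → ℤ, ∀ j : ℕ, 1 ≤ j → j ∉ S → Real.sqrt j ≤ C * brak S ℓ →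
            ∃ k ≤ k₀, ρ₀ / 2 * brak S ℓ ≤
              |iteratedDeriv k
                (fun t => (∑ i ∈ S, (ℓ i : ℝ) * ωε i t) + (m t * freq j t + r j t)) h|) ∧
          (∀ ℓ : ℕ → ℤ, (∃ i ∈ S, ℓ i ≠ 0) → ∀ j j' : ℕ, 1 ≤ j → j ∉ S → 1 ≤ j' → j' ∉ S →
            |Real.sqrt j - Real.sqrt j'| ≤ C * brak S ℓ →
            ∃ k ≤ k₀, ρ₀ / 2 * brak S ℓ ≤
              |iteratedDeriv k
                (fun t => (∑ i ∈ S, (ℓ i : ℝ) * ωε i t)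
                  + (m t * freq j t + r j t) - (m t * freq j' t + r j' t)) h|) ∧
          (∀ ℓ : ℕ → ℤ, ∀ j j' : ℕ, 1 ≤ j → j ∉ S → 1 ≤ j' → j' ∉ S →
            Real.sqrt j + Real.sqrt j' ≤ C * brak S ℓ →
            ∃ k ≤ k₀, ρ₀ / 2 * brak S ℓ ≤
              |iteratedDeriv k
                (fun t => (∑ i ∈ S, (ℓ i : ℝ) * ωε i t)
                  + (m t * freq j t + r j t) + (m t * freq j' t + r j' t)) h|) := by
  classical
  obtain ⟨M, hM0, hMa, hMb⟩ := freq_master_bound h₁ hh₁ k₀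
  obtain ⟨K, hKdef⟩ : ∃ K : ℝ, K = (S.card : ℝ) + 2^k₀ * (C + 2*M) + 2 := ⟨_, rfl⟩
  have hK : 0 < K := by
    rw [hKdef]
    have h1 : (0:ℝ) ≤ (S.card : ℝ) := by positivity
    have h2 : (0:ℝ) ≤ 2^k₀ * (C + 2*M) := by positivity
    linarith
  refine ⟨ρ₀ / (2*K), by positivity, ?_⟩
  intro δ hδ0 hδδ ωε m r hsm1 hsm2 hsm3 hb1 hb2 hb3 h hmem
  set s : Set ℝ := Ioi (0:ℝ) with hsdef
  have hsopen : IsOpen s := isOpen_Ioi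
  have hsu : UniqueDiffOn ℝ s := hsopen.uniqueDiffOn
  have hh0 : 0 < h := lt_of_lt_of_le hh₁ hmem.1
  have hhs : h ∈ s := hh0
  have hkK : ∀ {f : ℝ → ℝ} {k : ℕ}, k ≤ k₀ → ContDiffOn ℝ (k₀:ℕ) f s → ContDiffOn ℝ k f s :=
    fun hk hf => hf.of_le (by exact_mod_cast hk)
  have hkT : ∀ {f : ℝ → ℝ} {k : ℕ}, ContDiffOn ℝ ∞ f s → ContDiffOn ℝ k f s :=
    fun hf => hf.of_le (by exact_mod_cast le_top)
  -- The main perturbation estimate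
  have KEY : ∀ (u ρf : ℝ → ℝ), ContDiffOn ℝ ∞ u s → ContDiffOn ℝ (k₀:ℕ) ρf s →
      ∀ ℓ : ℕ → ℤ,
      |u h| ≤ (C + 2*M) * brak S ℓ →
      (∀ b : ℕ, 1 ≤ b → b ≤ k₀ → |iteratedDerivWithin b u s h| ≤ 2*M) →
      (∀ k : ℕ, k ≤ k₀ → |iteratedDerivWithin k ρf s h| ≤ 2*δ) →
      ∀ k : ℕ, k ≤ k₀ →
      ρ₀ * brak S ℓ ≤ |iteratedDeriv k (fun t => (∑ i ∈ S, (ℓ i:ℝ) * freq i t) + u t) h| →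
      ρ₀/2 * brak S ℓ ≤ |iteratedDeriv k
        (fun t => (∑ i ∈ S, (ℓ i:ℝ) * ωε i t) + (m t * u t + ρf t)) h| := by
    intro u ρf hu hρf ℓ hu0 hub hρb k hk hlow
    set L : ℝ := brak S ℓ with hLdef
    have hL1 : 1 ≤ L := one_le_brak S ℓ
    have hL0 : 0 ≤ L := by linarith
    -- smoothness of the pieces
    have hfreqS : ∀ i ∈ S, ContDiffOn ℝ ∞ (freq i) s := fun i hi => freq_smooth i (hS i hi)
    have hsum_freq : ContDiffOn ℝ ∞ (fun t => ∑ i ∈ S, (ℓ i:ℝ) * freq i t) s :=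
      ContDiffOn.sum (fun i hi => contDiffOn_const.mul (hfreqS i hi))
    have hωεS : ∀ i ∈ S, ContDiffOn ℝ (k₀:ℕ) (ωε i) s := fun i hi => (hsm1 i hi).contDiffOn
    have hmS : ContDiffOn ℝ (k₀:ℕ) (fun t => m t - 1) s := hsm2.contDiffOn.sub contDiffOn_const
    have hpert : ContDiffOn ℝ (k₀:ℕ)
        (fun t => ∑ i ∈ S, (ℓ i:ℝ) * (ωε i t - freq i t)) s :=
      ContDiffOn.sum (fun i hi => contDiffOn_const.mul
        ((hωεS i hi).sub ((hfreqS i hi).of_le (by exact_mod_cast le_top))))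
    -- decomposition
    have hdecomp : (fun t => (∑ i ∈ S, (ℓ i:ℝ) * ωε i t) + (m t * u t + ρf t))
        = fun t => ((∑ i ∈ S, (ℓ i:ℝ) * freq i t) + u t)
            + ((∑ i ∈ S, (ℓ i:ℝ) * (ωε i t - freq i t)) + ((m t - 1) * u t + ρf t)) := by
      funext t
      have hsub : ∑ i ∈ S, (ℓ i:ℝ) * (ωε i t - freq i t)
          = (∑ i ∈ S, (ℓ i:ℝ) * ωε i t) - ∑ i ∈ S, (ℓ i:ℝ) * freq i t := by
        rw [← Finset.sum_sub_distrib]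
        exact Finset.sum_congr rfl (fun i _ => by ring)
      rw [hsub]; ring
    -- the unperturbed part within
    have hA : iteratedDeriv k (fun t => (∑ i ∈ S, (ℓ i:ℝ) * freq i t) + u t) h
        = iteratedDerivWithin k (fun t => (∑ i ∈ S, (ℓ i:ℝ) * freq i t) + u t) s h :=
      (iDW_eq k hsopen hhs _).symm
    -- bound the perturbation
    have hg1 : ContDiffOn ℝ k (fun t => (∑ i ∈ S, (ℓ i:ℝ) * freq i t) + u t) s :=
      hkT (hsum_freq.add hu)
    have hQ : ContDiffOn ℝ k (fun t => (m t - 1) * u t) s :=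
      (hkK hk hmS).mul (hkT hu)
    have hR : ContDiffOn ℝ k ρf s := hkK hk hρf
    have hP : ContDiffOn ℝ k (fun t => ∑ i ∈ S, (ℓ i:ℝ) * (ωε i t - freq i t)) s :=
      hkK hk hpert
    have hd1 : ContDiffOn ℝ k
        (fun t => (∑ i ∈ S, (ℓ i:ℝ) * (ωε i t - freq i t)) + ((m t - 1) * u t + ρf t)) s :=
      hP.add (hQ.add hR)
    -- T1 bound
    have hT1 : |iteratedDerivWithin k
        (fun t => ∑ i ∈ S, (ℓ i:ℝ) * (ωε i t - freq i t)) s h| ≤ (S.card : ℝ) * (L * δ) := by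
      rw [iDW_sum hsu hhs k S _ (fun i hi => contDiffOn_const.mul
        ((hkK hk (hωεS i hi)).sub (hkT (hfreqS i hi))))]
      refine le_trans (Finset.abs_sum_le_sum_abs _ _) ?_
      have hterm : ∀ i ∈ S,
          |iteratedDerivWithin k (fun t => (ℓ i:ℝ) * (ωε i t - freq i t)) s h| ≤ L * δ := by
        intro i hi
        rw [iteratedDerivWithin_const_mul hhs hsu _
          (((hkK hk (hωεS i hi)).sub (hkT (hfreqS i hi))).contDiffWithinAt hhs), abs_mul]
        have h1 : |iteratedDerivWithin k (fun t => ωε i t - freq i t) s h| ≤ δ := by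
          rw [iDW_eq k hsopen hhs]
          exact hb1 k hk h hmem i hi
        have h2 : |(ℓ i:ℝ)| ≤ L := abs_le_brak ℓ hi
        exact mul_le_mul h2 h1 (abs_nonneg _) hL0
      refine le_trans (Finset.sum_le_card_nsmul S _ (L * δ) hterm) ?_
      rw [nsmul_eq_mul]
    -- T2 bound
    have hT2 : |iteratedDerivWithin k (fun t => (m t - 1) * u t) s h|
        ≤ 2^k₀ * (δ * ((C + 2*M) * L)) := by
      have hmul := norm_iteratedFDerivWithin_mul_le (𝕜 := ℝ)
        (f := fun t => m t - 1) (g := u) (N := (k₀:ℕ))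
        hmS (hu.of_le (by exact_mod_cast le_top)) hsu hhs (n := k) (by exact_mod_cast hk)
      rw [norm_iteratedFDerivWithin_eq_norm_iteratedDerivWithin, Real.norm_eq_abs] at hmul
      have hterm : ∀ i ∈ Finset.range (k+1),
          (k.choose i : ℝ) * ‖iteratedFDerivWithin ℝ i (fun t => m t - 1) s h‖ *
            ‖iteratedFDerivWithin ℝ (k-i) u s h‖
          ≤ (k.choose i : ℝ) * (δ * ((C + 2*M) * L)) := by
        intro i hi
        have hik : i ≤ k₀ := le_trans (Nat.lt_succ_iff.mp (Finset.mem_range.mp hi)) hk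
        have e1 : ‖iteratedFDerivWithin ℝ i (fun t => m t - 1) s h‖ ≤ δ := by
          rw [norm_iteratedFDerivWithin_eq_norm_iteratedDerivWithin, Real.norm_eq_abs,
            iDW_eq i hsopen hhs]
          exact hb2 i hik h hmem
        have e2 : ‖iteratedFDerivWithin ℝ (k-i) u s h‖ ≤ (C + 2*M) * L := by
          rw [norm_iteratedFDerivWithin_eq_norm_iteratedDerivWithin, Real.norm_eq_abs]
          rcases Nat.eq_zero_or_pos (k - i) with h0 | hpos
          · rw [h0, iteratedDerivWithin_zero]
            exact hu0
          · have := hub (k-i) hpos (le_trans (Nat.sub_le k i) hk)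
            have h2M : 2*M ≤ (C + 2*M) * L := by nlinarith
            linarith
        calc (k.choose i : ℝ) * ‖iteratedFDerivWithin ℝ i (fun t => m t - 1) s h‖ *
              ‖iteratedFDerivWithin ℝ (k-i) u s h‖
            ≤ (k.choose i : ℝ) * δ * ((C + 2*M) * L) := by
              apply mul_le_mul _ e2 (norm_nonneg _) (by positivity)
              exact mul_le_mul_of_nonneg_left e1 (by positivity)
          _ = (k.choose i : ℝ) * (δ * ((C + 2*M) * L)) := by ring
      refine le_trans hmul (le_trans (Finset.sum_le_sum hterm) ?_)
      rw [← Finset.sum_mul]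
      have hch : ∑ i ∈ Finset.range (k+1), (k.choose i : ℝ) = 2^k := by
        rw [← Nat.cast_sum]
        rw [Nat.sum_range_choose]
        push_cast; ring
      rw [hch]
      apply mul_le_mul_of_nonneg_right _ (by positivity)
      exact pow_le_pow_right₀ (by norm_num) hk
    -- assemble
    have hsplit : iteratedDerivWithin k
        (fun t => (∑ i ∈ S, (ℓ i:ℝ) * (ωε i t - freq i t)) + ((m t - 1) * u t + ρf t)) s h
        = iteratedDerivWithin k (fun t => ∑ i ∈ S, (ℓ i:ℝ) * (ωε i t - freq i t)) s h
          + (iteratedDerivWithin k (fun t => (m t - 1) * u t) s h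
            + iteratedDerivWithin k ρf s h) := by
      rw [iDW_add' hhs hsu hP (hQ.add hR), iDW_add' hhs hsu hQ hR]
    have hdbound : |iteratedDerivWithin k
        (fun t => (∑ i ∈ S, (ℓ i:ℝ) * (ωε i t - freq i t)) + ((m t - 1) * u t + ρf t)) s h|
        ≤ δ * K * L := by
      rw [hsplit]
      have h3 := hρb k hk
      have habs : |iteratedDerivWithin k (fun t => ∑ i ∈ S, (ℓ i:ℝ) * (ωε i t - freq i t)) s h
          + (iteratedDerivWithin k (fun t => (m t - 1) * u t) s h
            + iteratedDerivWithin k ρf s h)|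
          ≤ (S.card : ℝ) * (L * δ) + (2^k₀ * (δ * ((C + 2*M) * L)) + 2*δ) := by
        refine le_trans (abs_add_le _ _) ?_
        refine add_le_add hT1 (le_trans (abs_add_le _ _) (add_le_add hT2 h3))
      refine le_trans habs ?_
      rw [hKdef]
      have h2δ : 2*δ ≤ 2*δ*L := by nlinarith
      nlinarith [pow_pos (show (0:ℝ) < 2 by norm_num) k₀]
    -- combine
    have hfull : iteratedDeriv k
        (fun t => (∑ i ∈ S, (ℓ i:ℝ) * ωε i t) + (m t * u t + ρf t)) h
        = iteratedDeriv k (fun t => (∑ i ∈ S, (ℓ i:ℝ) * freq i t) + u t) h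
          + iteratedDerivWithin k
            (fun t => (∑ i ∈ S, (ℓ i:ℝ) * (ωε i t - freq i t)) + ((m t - 1) * u t + ρf t)) s h := by
      rw [hdecomp, hA, ← iDW_eq k hsopen hhs, iDW_add' hhs hsu hg1 hd1]
    have hδK : δ * K * L ≤ ρ₀/2 * L := by
      have h1 : δ * (2*K) ≤ ρ₀ := by
        rw [← le_div_iff₀ (by positivity : (0:ℝ) < 2*K)]
        exact hδδ
      have h2 : δ * (2*K) = 2*(δ*K) := by ring
      have : δ * K ≤ ρ₀/2 := by linarith
      nlinarith
    rw [hfull]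
    set A := iteratedDeriv k (fun t => (∑ i ∈ S, (ℓ i:ℝ) * freq i t) + u t) h
    set B := iteratedDerivWithin k
      (fun t => (∑ i ∈ S, (ℓ i:ℝ) * (ωε i t - freq i t)) + ((m t - 1) * u t + ρf t)) s h
    have htri : |A| ≤ |A + B| + |B| := by
      have := abs_add_le (A + B) (-B)
      simpa using this
    have : ρ₀ * L ≤ |A + B| + δ * K * L := by
      refine le_trans hlow (le_trans htri (by linarith))
    linarith
  refine ⟨?_, ?_, ?_, ?_⟩
  -- Case (0')
  · intro ℓ hℓ
    obtain ⟨k, hk, hbnd⟩ := H0 h hmem ℓ hℓ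
    refine ⟨k, hk, ?_⟩
    have hbrak0 : (0:ℝ) ≤ brak S ℓ := le_trans zero_le_one (one_le_brak S ℓ)
    have hlow : ρ₀ * brak S ℓ ≤
        |iteratedDeriv k (fun t => (∑ i ∈ S, (ℓ i:ℝ) * freq i t) + (fun _ : ℝ => (0:ℝ)) t) h| := by
      have e : (fun t => (∑ i ∈ S, (ℓ i:ℝ) * freq i t) + (fun _ : ℝ => (0:ℝ)) t)
          = fun t => ∑ i ∈ S, (ℓ i:ℝ) * freq i t := by funext t; simp
      rw [e]; exact hbnd
    have conc := KEY (fun _ => 0) (fun _ => 0) contDiffOn_const contDiffOn_const ℓ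
      (by simpa using mul_nonneg (by linarith : (0:ℝ) ≤ C + 2*M) hbrak0)
      (fun b _ _ => by rw [iDW_zero_fun hsu hhs]; simp; linarith)
      (fun k' _ => by rw [iDW_zero_fun hsu hhs]; simp; linarith)
      k hk hlow
    have e2 : (fun t => (∑ i ∈ S, (ℓ i:ℝ) * ωε i t)
          + (m t * (fun _ : ℝ => (0:ℝ)) t + (fun _ : ℝ => (0:ℝ)) t))
        = fun t => ∑ i ∈ S, (ℓ i:ℝ) * ωε i t := by funext t; simp
    rw [e2] at conc
    exact conc
  -- Case (I')
  · intro ℓ j hj1 hjS hjC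
    obtain ⟨k, hk, hbnd⟩ := HI h hmem ℓ j hj1 hjS
    refine ⟨k, hk, ?_⟩
    have hbrak1 : 1 ≤ brak S ℓ := one_le_brak S ℓ
    have hu0 : |freq j h| ≤ (C + 2*M) * brak S ℓ := by
      have h1 := freq_le j h
      nlinarith
    have hub : ∀ b : ℕ, 1 ≤ b → b ≤ k₀ → |iteratedDerivWithin b (freq j) s h| ≤ 2*M := by
      intro b hb hbk
      rw [iDW_eq b hsopen hhs]
      have := hMa b hb hbk j hj1 h hmem.1
      linarith
    have hρb : ∀ k' : ℕ, k' ≤ k₀ → |iteratedDerivWithin k' (r j) s h| ≤ 2*δ := by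
      intro k' hk'
      rw [iDW_eq k' hsopen hhs]
      have hx1 := hb3 k' hk' h hmem j hj1 hjS
      have hx2 : 1 ≤ Real.sqrt j := one_le_sqrt_j hj1
      nlinarith [abs_nonneg (iteratedDeriv k' (r j) h)]
    exact KEY (freq j) (r j) (freq_smooth j hj1) (hsm3 j hj1 hjS).contDiffOn ℓ
      hu0 hub hρb k hk hbnd
  -- Case (II-')
  · intro ℓ hℓ j j' hj1 hjS hj'1 hj'S hdiff
    obtain ⟨k, hk, hbnd⟩ := HIIminus h hmem ℓ hℓ j j' hj1 hjS hj'1 hj'S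
    refine ⟨k, hk, ?_⟩
    have hbrak1 : 1 ≤ brak S ℓ := one_le_brak S ℓ
    have t1 := hMb j hj1 h hmem.1
    have t2 := hMb j' hj'1 h hmem.1
    have hu0 : |freq j h - freq j' h| ≤ (C + 2*M) * brak S ℓ := by
      have e : freq j h - freq j' h = (freq j h - Real.sqrt j)
          + ((Real.sqrt j - Real.sqrt j') + -(freq j' h - Real.sqrt j')) := by ring
      have habs : |freq j h - freq j' h| ≤ M + (C * brak S ℓ + M) := by
        rw [e]
        refine le_trans (abs_add_le _ _) (add_le_add t1 ?_)
        refine le_trans (abs_add_le _ _) (add_le_add hdiff ?_)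
        rw [abs_neg]; exact t2
      nlinarith
    have hub : ∀ b : ℕ, 1 ≤ b → b ≤ k₀ →
        |iteratedDerivWithin b (fun t => freq j t - freq j' t) s h| ≤ 2*M := by
      intro b hb hbk
      rw [iDW_sub' hhs hsu (hkT (freq_smooth j hj1)) (hkT (freq_smooth j' hj'1))]
      have s1 : |iteratedDerivWithin b (freq j) s h| ≤ M := by
        rw [iDW_eq b hsopen hhs]; exact hMa b hb hbk j hj1 h hmem.1
      have s2 : |iteratedDerivWithin b (freq j') s h| ≤ M := by
        rw [iDW_eq b hsopen hhs]; exact hMa b hb hbk j' hj'1 h hmem.1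
      calc |iteratedDerivWithin b (freq j) s h - iteratedDerivWithin b (freq j') s h|
          = |iteratedDerivWithin b (freq j) s h + -(iteratedDerivWithin b (freq j') s h)| := by
            rw [sub_eq_add_neg]
        _ ≤ |iteratedDerivWithin b (freq j) s h| + |iteratedDerivWithin b (freq j') s h| := by
            refine le_trans (abs_add_le _ _) ?_; rw [abs_neg]
        _ ≤ 2*M := by linarith
    have hρb : ∀ k' : ℕ, k' ≤ k₀ →
        |iteratedDerivWithin k' (fun t => r j t - r j' t) s h| ≤ 2*δ := by
      intro k' hk'
      rw [iDW_sub' hhs hsu (hkK hk' (hsm3 j hj1 hjS).contDiffOn)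
        (hkK hk' (hsm3 j' hj'1 hj'S).contDiffOn)]
      have hx1 := hb3 k' hk' h hmem j hj1 hjS
      have hx2 := hb3 k' hk' h hmem j' hj'1 hj'S
      have hy1 : 1 ≤ Real.sqrt j := one_le_sqrt_j hj1
      have hy2 : 1 ≤ Real.sqrt j' := one_le_sqrt_j hj'1
      have s1 : |iteratedDerivWithin k' (r j) s h| ≤ δ := by
        rw [iDW_eq k' hsopen hhs]
        nlinarith [abs_nonneg (iteratedDeriv k' (r j) h)]
      have s2 : |iteratedDerivWithin k' (r j') s h| ≤ δ := by
        rw [iDW_eq k' hsopen hhs]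
        nlinarith [abs_nonneg (iteratedDeriv k' (r j') h)]
      calc |iteratedDerivWithin k' (r j) s h - iteratedDerivWithin k' (r j') s h|
          = |iteratedDerivWithin k' (r j) s h + -(iteratedDerivWithin k' (r j') s h)| := by
            rw [sub_eq_add_neg]
        _ ≤ |iteratedDerivWithin k' (r j) s h| + |iteratedDerivWithin k' (r j') s h| := by
            refine le_trans (abs_add_le _ _) ?_; rw [abs_neg]
        _ ≤ 2*δ := by linarith
    have hlow : ρ₀ * brak S ℓ ≤ |iteratedDeriv k
        (fun t => (∑ i ∈ S, (ℓ i:ℝ) * freq i t) + (fun t => freq j t - freq j' t) t) h| := by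
      have e : (fun t => (∑ i ∈ S, (ℓ i:ℝ) * freq i t) + (fun t => freq j t - freq j' t) t)
          = fun t => (∑ i ∈ S, (ℓ i:ℝ) * freq i t) + freq j t - freq j' t := by
        funext t; ring
      rw [e]; exact hbnd
    have conc := KEY (fun t => freq j t - freq j' t) (fun t => r j t - r j' t)
      ((freq_smooth j hj1).sub (freq_smooth j' hj'1))
      ((hsm3 j hj1 hjS).contDiffOn.sub (hsm3 j' hj'1 hj'S).contDiffOn) ℓ
      hu0 hub hρb k hk hlow
    have e2 : (fun t => (∑ i ∈ S, (ℓ i:ℝ) * ωε i t)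
          + (m t * (fun t => freq j t - freq j' t) t + (fun t => r j t - r j' t) t))
        = fun t => (∑ i ∈ S, (ℓ i:ℝ) * ωε i t)
          + (m t * freq j t + r j t) - (m t * freq j' t + r j' t) := by
      funext t; ring
    rw [e2] at conc
    exact conc
  -- Case (II+')
  · intro ℓ j j' hj1 hjS hj'1 hj'S hsum
    obtain ⟨k, hk, hbnd⟩ := HIIplus h hmem ℓ j j' hj1 hjS hj'1 hj'S
    refine ⟨k, hk, ?_⟩
    have hbrak1 : 1 ≤ brak S ℓ := one_le_brak S ℓ
    have t1 := hMb j hj1 h hmem.1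
    have t2 := hMb j' hj'1 h hmem.1
    have hu0 : |freq j h + freq j' h| ≤ (C + 2*M) * brak S ℓ := by
      have e : freq j h + freq j' h = (freq j h - Real.sqrt j)
          + ((Real.sqrt j + Real.sqrt j') + (freq j' h - Real.sqrt j')) := by ring
      have habs : |freq j h + freq j' h| ≤ M + (C * brak S ℓ + M) := by
        rw [e]
        refine le_trans (abs_add_le _ _) (add_le_add t1 ?_)
        refine le_trans (abs_add_le _ _) (add_le_add ?_ t2)
        rw [abs_of_nonneg (by positivity : (0:ℝ) ≤ Real.sqrt j + Real.sqrt j')]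
        exact hsum
      nlinarith
    have hub : ∀ b : ℕ, 1 ≤ b → b ≤ k₀ →
        |iteratedDerivWithin b (fun t => freq j t + freq j' t) s h| ≤ 2*M := by
      intro b hb hbk
      rw [iDW_add' hhs hsu (hkT (freq_smooth j hj1)) (hkT (freq_smooth j' hj'1))]
      have s1 : |iteratedDerivWithin b (freq j) s h| ≤ M := by
        rw [iDW_eq b hsopen hhs]; exact hMa b hb hbk j hj1 h hmem.1
      have s2 : |iteratedDerivWithin b (freq j') s h| ≤ M := by
        rw [iDW_eq b hsopen hhs]; exact hMa b hb hbk j' hj'1 h hmem.1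
      refine le_trans (abs_add_le _ _) ?_; linarith
    have hρb : ∀ k' : ℕ, k' ≤ k₀ →
        |iteratedDerivWithin k' (fun t => r j t + r j' t) s h| ≤ 2*δ := by
      intro k' hk'
      rw [iDW_add' hhs hsu (hkK hk' (hsm3 j hj1 hjS).contDiffOn)
        (hkK hk' (hsm3 j' hj'1 hj'S).contDiffOn)]
      have hx1 := hb3 k' hk' h hmem j hj1 hjS
      have hx2 := hb3 k' hk' h hmem j' hj'1 hj'S
      have hy1 : 1 ≤ Real.sqrt j := one_le_sqrt_j hj1
      have hy2 : 1 ≤ Real.sqrt j' := one_le_sqrt_j hj'1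
      have s1 : |iteratedDerivWithin k' (r j) s h| ≤ δ := by
        rw [iDW_eq k' hsopen hhs]
        nlinarith [abs_nonneg (iteratedDeriv k' (r j) h)]
      have s2 : |iteratedDerivWithin k' (r j') s h| ≤ δ := by
        rw [iDW_eq k' hsopen hhs]
        nlinarith [abs_nonneg (iteratedDeriv k' (r j') h)]
      refine le_trans (abs_add_le _ _) ?_; linarith
    have hlow : ρ₀ * brak S ℓ ≤ |iteratedDeriv k
        (fun t => (∑ i ∈ S, (ℓ i:ℝ) * freq i t) + (fun t => freq j t + freq j' t) t) h| := by
      have e : (fun t => (∑ i ∈ S, (ℓ i:ℝ) * freq i t) + (fun t => freq j t + freq j' t) t)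
          = fun t => (∑ i ∈ S, (ℓ i:ℝ) * freq i t) + freq j t + freq j' t := by
        funext t; ring
      rw [e]; exact hbnd
    have conc := KEY (fun t => freq j t + freq j' t) (fun t => r j t + r j' t)
      ((freq_smooth j hj1).add (freq_smooth j' hj'1))
      ((hsm3 j hj1 hjS).contDiffOn.add (hsm3 j' hj'1 hj'S).contDiffOn) ℓ
      hu0 hub hρb k hk hlow
    have e2 : (fun t => (∑ i ∈ S, (ℓ i:ℝ) * ωε i t)
          + (m t * (fun t => freq j t + freq j' t) t + (fun t => r j t + r j' t) t))
        = fun t => (∑ i ∈ S, (ℓ i:ℝ) * ωε i t)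
          + (m t * freq j t + r j t) + (m t * freq j' t + r j' t) := by
      funext t; ring
    rw [e2] at conc
    exact conc
end
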